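/- For every n ≥ 3, the alternating group A_{n+2} on {1,...,n+2} is generated by the subgroup consisting of all even permutations fixing both n+1 and n+2 (a copy of A_n) together with the single double transposition (n-1, n+1)(n, n+2). -/
import Mathlib

open Equiv Equiv.Perm Subgroup

theorem stmt15 (n : ℕ) (hn : 3 ≤ n) :
    -- letters 1,…,n+2 are represented 0-based by `Fin (n+2)`;
    -- the letters n+1 and n+2 are the indices `n` and `n+1`, and the double
    -- transposition (n-1, n+1)(n, n+2) swaps indices n-2 ↔ n and n-1 ↔ n+1.
    let a : Fin (n + 2) := ⟨n - 2, by omega⟩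
    let b : Fin (n + 2) := ⟨n - 1, by omega⟩
    let p : Fin (n + 2) := ⟨n, by omega⟩
    let q : Fin (n + 2) := ⟨n + 1, by omega⟩
    let t : Equiv.Perm (Fin (n + 2)) := Equiv.swap a p * Equiv.swap b q
    Subgroup.closure
        ({σ | σ ∈ alternatingGroup (Fin (n + 2)) ∧ σ p = p ∧ σ q = q} ∪ {t}) =
      alternatingGroup (Fin (n + 2)) := by
  intro a b p q t
  set H := Subgroup.closure
      ({σ | σ ∈ alternatingGroup (Fin (n + 2)) ∧ σ p = p ∧ σ q = q} ∪ {t}) with hH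
  have ha : a.val = n - 2 := rfl
  have hb : b.val = n - 1 := rfl
  have hp : p.val = n := rfl
  have hq : q.val = n + 1 := rfl
  have neval : ∀ x y : Fin (n + 2), x.val ≠ y.val → x ≠ y := by
    intro x y h e; exact h (congrArg Fin.val e)
  have hpq : p ≠ q := neval _ _ (by omega)
  -- membership of the `A_n` part
  have hAn : ∀ σ : Equiv.Perm (Fin (n + 2)),
      σ ∈ alternatingGroup (Fin (n + 2)) → σ p = p → σ q = q → σ ∈ H := by
    intro σ h1 h2 h3
    rw [hH]; exact Subgroup.subset_closure (Or.inl ⟨h1, h2, h3⟩)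
  have ht : t ∈ H := by rw [hH]; exact Subgroup.subset_closure (Or.inr rfl)
  -- product of two nondegenerate swaps inside {0,...,n-1}
  have hS : ∀ u v w z : Fin (n + 2), u.val < n → v.val < n → w.val < n → z.val < n →
      u ≠ v → w ≠ z → Equiv.swap u v * Equiv.swap w z ∈ H := by
    intro u v w z hu hv hw hz huv hwz
    apply hAn
    · rw [Equiv.Perm.mem_alternatingGroup, Equiv.Perm.sign_mul,
        Equiv.Perm.sign_swap huv, Equiv.Perm.sign_swap hwz]
      simp
    · rw [Equiv.Perm.mul_apply,
        Equiv.swap_apply_of_ne_of_ne (neval p w (by omega)) (neval p z (by omega)),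
        Equiv.swap_apply_of_ne_of_ne (neval p u (by omega)) (neval p v (by omega))]
    · rw [Equiv.Perm.mul_apply,
        Equiv.swap_apply_of_ne_of_ne (neval q w (by omega)) (neval q z (by omega)),
        Equiv.swap_apply_of_ne_of_ne (neval q u (by omega)) (neval q v (by omega))]
  have hconj : ∀ f g : Equiv.Perm (Fin (n + 2)), f ∈ H → g ∈ H → f * g * f⁻¹ ∈ H :=
    fun f g hf hg => mul_mem (mul_mem hf hg) (inv_mem hf)
  have conj2 : ∀ (f : Equiv.Perm (Fin (n + 2))) (u v w z : Fin (n + 2)),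
      f * (Equiv.swap u v * Equiv.swap w z) * f⁻¹ =
        Equiv.swap (f u) (f v) * Equiv.swap (f w) (f z) := by
    intro f u v w z
    rw [Equiv.swap_apply_apply, Equiv.swap_apply_apply]
    group
  -- the base point 0
  set x₀ : Fin (n + 2) := ⟨0, by omega⟩ with hx₀def
  have hx₀ : x₀.val = 0 := rfl
  -- values of t
  have hta : t a = p := by
    show (Equiv.swap a p * Equiv.swap b q) a = p
    rw [Equiv.Perm.mul_apply,
      Equiv.swap_apply_of_ne_of_ne (neval a b (by omega)) (neval a q (by omega)),
      Equiv.swap_apply_left]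
  have htb : t b = q := by
    show (Equiv.swap a p * Equiv.swap b q) b = q
    rw [Equiv.Perm.mul_apply, Equiv.swap_apply_left,
      Equiv.swap_apply_of_ne_of_ne (neval q a (by omega)) (neval q p (by omega))]
  have htx₀ : t x₀ = x₀ := by
    show (Equiv.swap a p * Equiv.swap b q) x₀ = x₀
    rw [Equiv.Perm.mul_apply,
      Equiv.swap_apply_of_ne_of_ne (neval x₀ b (by omega)) (neval x₀ q (by omega)),
      Equiv.swap_apply_of_ne_of_ne (neval x₀ a (by omega)) (neval x₀ p (by omega))]
  -- base element : swap p q * swap p x₀ ∈ H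
  have he₀ : Equiv.swap p q * Equiv.swap p x₀ ∈ H := by
    have h1 : Equiv.swap a b * Equiv.swap a x₀ ∈ H :=
      hS a b a x₀ (by omega) (by omega) (by omega) (by omega)
        (neval _ _ (by omega)) (neval _ _ (by omega))
    have h2 := hconj t _ ht h1
    rw [conj2, hta, htb, htx₀] at h2
    exact h2
  -- all elements swap p q * swap p y for y < n
  have gmem : ∀ y : Fin (n + 2), y.val < n → Equiv.swap p q * Equiv.swap p y ∈ H := by
    intro y hy
    by_cases hyx : y = x₀
    · rw [hyx]; exact he₀
    · have hyx' : y.val ≠ x₀.val := fun h => hyx (Fin.ext h)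
      obtain ⟨z, hz, hz0, hzy⟩ : ∃ z : Fin (n + 2), z.val < n ∧ z.val ≠ x₀.val ∧ z.val ≠ y.val := by
        by_cases h1 : y.val = 1
        · exact ⟨⟨2, by omega⟩, by simp [hx₀]; omega⟩
        · exact ⟨⟨1, by omega⟩, by simp [hx₀]; omega⟩
      have hσ : Equiv.swap x₀ z * Equiv.swap x₀ y ∈ H :=
        hS x₀ z x₀ y (by omega) hz (by omega) hy
          (neval _ _ (by omega)) (neval _ _ (by omega))
      have h2 := hconj _ _ hσ he₀
      rw [conj2] at h2
      have hσp : (Equiv.swap x₀ z * Equiv.swap x₀ y) p = p := by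
        rw [Equiv.Perm.mul_apply,
          Equiv.swap_apply_of_ne_of_ne (neval p x₀ (by omega)) (neval p y (by omega)),
          Equiv.swap_apply_of_ne_of_ne (neval p x₀ (by omega)) (neval p z (by omega))]
      have hσq : (Equiv.swap x₀ z * Equiv.swap x₀ y) q = q := by
        rw [Equiv.Perm.mul_apply,
          Equiv.swap_apply_of_ne_of_ne (neval q x₀ (by omega)) (neval q y (by omega)),
          Equiv.swap_apply_of_ne_of_ne (neval q x₀ (by omega)) (neval q z (by omega))]
      have hσx : (Equiv.swap x₀ z * Equiv.swap x₀ y) x₀ = y := by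
        rw [Equiv.Perm.mul_apply, Equiv.swap_apply_left,
          Equiv.swap_apply_of_ne_of_ne (neval y x₀ hyx') (neval y z (fun h => hzy h.symm))]
      rw [hσp, hσq, hσx] at h2
      exact h2
  -- case: both u v < n
  have case1 : ∀ u v : Fin (n + 2), u.val < n → v.val < n → u ≠ v →
      Equiv.swap p q * Equiv.swap u v ∈ H := by
    intro u v hu hv huv
    have hvp : v ≠ p := neval _ _ (by omega)
    have hvu : v ≠ u := Ne.symm huv
    have e1 : Equiv.swap p u * (Equiv.swap p v * Equiv.swap p u) = Equiv.swap u v := by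
      have h := (Equiv.swap_apply_apply (Equiv.swap p u) p v).symm
      rw [Equiv.swap_inv] at h
      rw [← mul_assoc, h, Equiv.swap_apply_left, Equiv.swap_apply_of_ne_of_ne hvp hvu]
    have m := mul_mem (mul_mem (gmem u hu) (inv_mem (gmem v hv))) (gmem u hu)
    have e2 : (Equiv.swap p q * Equiv.swap p u) * (Equiv.swap p q * Equiv.swap p v)⁻¹ *
        (Equiv.swap p q * Equiv.swap p u) = Equiv.swap p q * Equiv.swap u v := by
      rw [mul_inv_rev, Equiv.swap_inv, Equiv.swap_inv, ← e1]
      simp only [mul_assoc]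
      rw [Equiv.swap_mul_self_mul]
    rw [← e2]
    exact m
  -- case: u < n, v = q
  have caseq : ∀ u : Fin (n + 2), u.val < n → Equiv.swap p q * Equiv.swap u q ∈ H := by
    intro u hu
    have hup : u ≠ p := neval _ _ (by omega)
    have huq : u ≠ q := neval _ _ (by omega)
    have h := (Equiv.swap_apply_apply (Equiv.swap p q) u q).symm
    rw [Equiv.swap_inv, Equiv.swap_apply_of_ne_of_ne hup huq, Equiv.swap_apply_right] at h
    have e3 : Equiv.swap p q * Equiv.swap u q = (Equiv.swap p q * Equiv.swap p u)⁻¹ := by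
      rw [mul_inv_rev, Equiv.swap_inv, Equiv.swap_inv]
      calc Equiv.swap p q * Equiv.swap u q
          = (Equiv.swap p q * Equiv.swap u q * Equiv.swap p q) * Equiv.swap p q := by
            rw [mul_assoc, Equiv.swap_mul_self, mul_one]
        _ = Equiv.swap u p * Equiv.swap p q := by rw [h]
        _ = Equiv.swap p u * Equiv.swap p q := by rw [Equiv.swap_comm u p]
    rw [e3]
    exact inv_mem (gmem u hu)
  -- trichotomy
  have htri : ∀ x : Fin (n + 2), x.val < n ∨ x = p ∨ x = q := by
    intro x
    by_cases h1 : x.val < n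
    · exact Or.inl h1
    · by_cases h2 : x.val = n
      · exact Or.inr (Or.inl (Fin.ext h2))
      · exact Or.inr (Or.inr (Fin.ext (by omega)))
  -- key: swap p q * swap u v ∈ H for all u ≠ v
  have key : ∀ u v : Fin (n + 2), u ≠ v → Equiv.swap p q * Equiv.swap u v ∈ H := by
    intro u v huv
    rcases htri u with hu | rfl | rfl <;> rcases htri v with hv | rfl | rfl
    · exact case1 u v hu hv huv
    · rw [Equiv.swap_comm u p]; exact gmem u hu
    · exact caseq u hu
    · exact gmem v hv
    · exact absurd rfl huv
    · rw [Equiv.swap_mul_self]; exact one_mem _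
    · rw [Equiv.swap_comm q v]; exact caseq v hv
    · rw [Equiv.swap_comm q p, Equiv.swap_mul_self]; exact one_mem _
    · exact absurd rfl huv
  -- main induction
  have main : ∀ f : Equiv.Perm (Fin (n + 2)), f ∈ H ∨ Equiv.swap p q * f ∈ H := by
    intro f
    refine Equiv.Perm.swap_induction_on f (Or.inl (one_mem _)) ?_
    intro g x y hxy ih
    rcases ih with h | h
    · right; rw [← mul_assoc]; exact mul_mem (key x y hxy) h
    · left
      have e : Equiv.swap x y * g =
          (Equiv.swap p q * Equiv.swap x y)⁻¹ * (Equiv.swap p q * g) := by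
        rw [mul_inv_rev, Equiv.swap_inv, Equiv.swap_inv]
        simp only [mul_assoc]
        rw [Equiv.swap_mul_self_mul]
      rw [e]
      exact mul_mem (inv_mem (key x y hxy)) h
  -- upper bound
  have Hle : H ≤ alternatingGroup (Fin (n + 2)) := by
    rw [hH]
    apply (Subgroup.closure_le _).2
    rintro σ (⟨h1, -, -⟩ | h)
    · exact h1
    · simp only [Set.mem_singleton_iff] at h
      subst h
      show Equiv.swap a p * Equiv.swap b q ∈ _
      rw [SetLike.mem_coe, Equiv.Perm.mem_alternatingGroup, Equiv.Perm.sign_mul,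
        Equiv.Perm.sign_swap (neval a p (by omega)), Equiv.Perm.sign_swap (neval b q (by omega))]
      simp
  apply le_antisymm Hle
  intro σ hσ
  rcases main σ with h | h
  · exact h
  · exfalso
    have h1 := Hle h
    rw [Equiv.Perm.mem_alternatingGroup, Equiv.Perm.sign_mul, Equiv.Perm.sign_swap hpq,
      (Equiv.Perm.mem_alternatingGroup).1 hσ, mul_one] at h1
    exact absurd h1 (by decide)
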